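/- Let A be a ring and C a bounded cochain complex of A-modules whose homology is concentrated in degree 0 (H^i(C) = 0 for all i ≠ 0). Assume that for every i, both of the following cochain complexes of abelian groups have homology concentrated in degree 0: (a) the complex Homgr_A(C^i, C) with degree-j term Hom_A(C^i, C^j) and differential given by postcomposition with ∂_C; (b) the complex Homgr_A(C, C^i) with degree-j term Hom_A(C^{−j}, C^i) and differential induced by precomposition with ∂_C (with the usual sign). Then C is homotopy equivalent to the complex H⁰(C)[0] having the A-module H⁰(C) in degree 0 and zero elsewhere; i.e. C ≅ H⁰(C)[0] in K^b(A). -/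

import Mathlib

open CategoryTheory CategoryTheory.Limits

namespace Okuyama9

variable {A : Type} [Ring A] (C : CochainComplex (ModuleCat A) ℤ)

/-- The contraction relation in degree `j`. -/
def Rel (σ : ∀ i j : ℤ, C.X i ⟶ C.X j) (j : ℤ) : Prop :=
  𝟙 (C.X j) = σ j (j - 1) ≫ C.d (j - 1) j + C.d j (j + 1) ≫ σ (j + 1) j

lemma pos (n : ℕ) (hz : ∀ i : ℤ, (n : ℤ) < |i| → IsZero (C.X i))
    (hHomFrom : ∀ i j : ℤ, j ≠ 0 → ∀ φ : C.X i ⟶ C.X j,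
        φ ≫ C.d j (j + 1) = 0 →
        ∃ ψ : C.X i ⟶ C.X (j - 1), ψ ≫ C.d (j - 1) j = φ) :
    ∃ σ : ∀ i j : ℤ, C.X i ⟶ C.X j, ∀ j : ℤ, 1 ≤ j → Rel C σ j := by
  classical
  suffices h : ∀ k : ℕ, ∃ σ : ∀ i j : ℤ, C.X i ⟶ C.X j,
      ∀ j : ℤ, 1 ≤ j → (n : ℤ) + 1 - (k : ℤ) ≤ j → Rel C σ j by
    obtain ⟨σ, hσ⟩ := h (n + 1)
    exact ⟨σ, fun j h1 => hσ j h1 (by push_cast; omega)⟩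
  intro k
  induction k with
  | zero =>
    refine ⟨0, fun j h1 h2 => ?_⟩
    have : (n : ℤ) < |j| := by rw [abs_of_pos (by omega : (0:ℤ) < j)]; omega
    exact (hz j this).eq_of_src _ _
  | succ k ih =>
    obtain ⟨σ, hσ⟩ := ih
    by_cases hj₀ : 1 ≤ (n : ℤ) + 1 - ((k : ℤ) + 1)
    · set j₀ : ℤ := (n : ℤ) + 1 - ((k : ℤ) + 1) with hj₀def
      have hR1 : Rel C σ (j₀ + 1) := hσ _ (by omega) (by omega)
      rw [Rel, show j₀ + 1 - 1 = j₀ by omega] at hR1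
      set φ : C.X j₀ ⟶ C.X j₀ := 𝟙 (C.X j₀) - C.d j₀ (j₀ + 1) ≫ σ (j₀ + 1) j₀ with hφ
      have e1 : σ (j₀ + 1) j₀ ≫ C.d j₀ (j₀ + 1)
          = 𝟙 (C.X (j₀ + 1)) - C.d (j₀ + 1) (j₀ + 1 + 1) ≫ σ (j₀ + 1 + 1) (j₀ + 1) := by
        rw [hR1]; abel
      have hφd : φ ≫ C.d j₀ (j₀ + 1) = 0 := by
        rw [hφ, Preadditive.sub_comp, Category.id_comp, Category.assoc, e1, Preadditive.comp_sub, Category.comp_id,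
          ← Category.assoc, C.d_comp_d, zero_comp, sub_zero, sub_self]
      obtain ⟨ψ, hψ⟩ := hHomFrom j₀ j₀ (by omega) φ hφd
      refine ⟨fun a b => if h : a = j₀ ∧ b = j₀ - 1 then
          eqToHom (congrArg C.X h.1) ≫ ψ ≫ eqToHom (congrArg C.X h.2.symm) else σ a b,
        fun j h1 h2 => ?_⟩
      rcases eq_or_lt_of_le (show j₀ ≤ j by omega) with hj | hj
      · subst hj
        rw [Rel, dif_pos ⟨rfl, rfl⟩, dif_neg (by omega : ¬((j₀ + 1 = j₀) ∧ (j₀ = j₀ - 1)))]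
        simp only [eqToHom_refl, Category.id_comp, Category.comp_id]
        rw [hψ, hφ]
        abel
      · have hR := hσ j h1 (by omega)
        rw [Rel] at hR ⊢
        rw [dif_neg (by omega : ¬((j = j₀) ∧ (j - 1 = j₀ - 1))),
          dif_neg (by omega : ¬((j + 1 = j₀) ∧ (j = j₀ - 1)))]
        exact hR
    · exact ⟨σ, fun j h1 h2 => hσ j h1 (by omega)⟩

lemma neg (n : ℕ) (hz : ∀ i : ℤ, (n : ℤ) < |i| → IsZero (C.X i))
    (hHomTo' : ∀ i j : ℤ, j ≠ 0 → ∀ φ : C.X j ⟶ C.X i,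
        C.d (j - 1) j ≫ φ = 0 →
        ∃ ψ : C.X (j + 1) ⟶ C.X i, C.d j (j + 1) ≫ ψ = φ) :
    ∃ σ : ∀ i j : ℤ, C.X i ⟶ C.X j, ∀ j : ℤ, j ≤ -1 → Rel C σ j := by
  classical
  suffices h : ∀ k : ℕ, ∃ σ : ∀ i j : ℤ, C.X i ⟶ C.X j,
      ∀ j : ℤ, j ≤ -1 → j ≤ -((n : ℤ) + 1) + (k : ℤ) → Rel C σ j by
    obtain ⟨σ, hσ⟩ := h (n + 1)
    exact ⟨σ, fun j h1 => hσ j h1 (by push_cast; omega)⟩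
  intro k
  induction k with
  | zero =>
    refine ⟨0, fun j h1 h2 => ?_⟩
    have : (n : ℤ) < |j| := by rw [abs_of_neg (by omega : j < 0)]; omega
    exact (hz j this).eq_of_src _ _
  | succ k ih =>
    obtain ⟨σ, hσ⟩ := ih
    by_cases hj₀ : -((n : ℤ) + 1) + ((k : ℤ) + 1) ≤ -1
    · set j₀ : ℤ := -((n : ℤ) + 1) + ((k : ℤ) + 1) with hj₀def
      have hR1 : Rel C σ (j₀ - 1) := hσ _ (by omega) (by omega)
      rw [Rel, show j₀ - 1 + 1 = j₀ by omega] at hR1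
      set φ : C.X j₀ ⟶ C.X j₀ := 𝟙 (C.X j₀) - σ j₀ (j₀ - 1) ≫ C.d (j₀ - 1) j₀ with hφ
      have e1 : C.d (j₀ - 1) j₀ ≫ σ j₀ (j₀ - 1)
          = 𝟙 (C.X (j₀ - 1)) - σ (j₀ - 1) (j₀ - 1 - 1) ≫ C.d (j₀ - 1 - 1) (j₀ - 1) := by
        rw [hR1]; abel
      have hφd : C.d (j₀ - 1) j₀ ≫ φ = 0 := by
        rw [hφ, Preadditive.comp_sub, Category.comp_id, ← Category.assoc, e1, Preadditive.sub_comp, Category.id_comp,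
          Category.assoc, C.d_comp_d, comp_zero, sub_zero, sub_self]
      obtain ⟨ψ, hψ⟩ := hHomTo' j₀ j₀ (by omega) φ hφd
      refine ⟨fun a b => if h : a = j₀ + 1 ∧ b = j₀ then
          eqToHom (congrArg C.X h.1) ≫ ψ ≫ eqToHom (congrArg C.X h.2.symm) else σ a b,
        fun j h1 h2 => ?_⟩
      rcases eq_or_lt_of_le (show j ≤ j₀ by omega) with hj | hj
      · subst hj  -- j = j₀
        rw [Rel, dif_neg (by omega : ¬((j₀ = j₀ + 1) ∧ (j₀ - 1 = j₀))),
          dif_pos ⟨rfl, rfl⟩]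
        simp only [eqToHom_refl, Category.id_comp, Category.comp_id]
        rw [hψ, hφ]
        abel
      · have hR := hσ j h1 (by omega)
        rw [Rel] at hR ⊢
        rw [dif_neg (by omega : ¬((j = j₀ + 1) ∧ (j - 1 = j₀))),
          dif_neg (by omega : ¬((j + 1 = j₀ + 1) ∧ (j = j₀)))]
        exact hR
    · exact ⟨σ, fun j h1 h2 => hσ j h1 (by omega)⟩

lemma total (n : ℕ) (hz : ∀ i : ℤ, (n : ℤ) < |i| → IsZero (C.X i))
    (hHomFrom : ∀ i j : ℤ, j ≠ 0 → ∀ φ : C.X i ⟶ C.X j,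
        φ ≫ C.d j (j + 1) = 0 →
        ∃ ψ : C.X i ⟶ C.X (j - 1), ψ ≫ C.d (j - 1) j = φ)
    (hHomTo' : ∀ i j : ℤ, j ≠ 0 → ∀ φ : C.X j ⟶ C.X i,
        C.d (j - 1) j ≫ φ = 0 →
        ∃ ψ : C.X (j + 1) ⟶ C.X i, C.d j (j + 1) ≫ ψ = φ) :
    ∃ σ : ∀ i j : ℤ, C.X i ⟶ C.X j, ∀ j : ℤ, j ≠ 0 →
      𝟙 (C.X j) = σ j (j - 1) ≫ C.d (j - 1) j + C.d j (j + 1) ≫ σ (j + 1) j := by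
  obtain ⟨σp, hσp⟩ := Okuyama9.pos C n hz hHomFrom
  obtain ⟨σm, hσm⟩ := Okuyama9.neg C n hz hHomTo'
  refine ⟨fun i j => if 1 ≤ i then σp i j else σm i j, fun j hj => ?_⟩
  rcases lt_or_gt_of_ne hj with h | h
  · have hR := hσm j (by omega)
    rw [Okuyama9.Rel] at hR
    simp only [if_neg (by omega : ¬(1:ℤ) ≤ j), if_neg (by omega : ¬(1:ℤ) ≤ j + 1)]
    exact hR
  · have hR := hσp j (by omega)
    rw [Okuyama9.Rel] at hR
    simp only [if_pos (by omega : (1:ℤ) ≤ j), if_pos (by omega : (1:ℤ) ≤ j + 1)]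
    exact hR

end Okuyama9

theorem okuyama_statement9
    (A : Type) [Ring A] (C : CochainComplex (ModuleCat A) ℤ)
    (hbdd : ∃ n : ℕ, ∀ i : ℤ, (n : ℤ) < |i| → IsZero (C.X i))
    (hH : ∀ i : ℤ, i ≠ 0 → IsZero (C.homology i))
    -- `Homgr_A(C^i, C)` has homology concentrated in degree 0
    (hHomFrom : ∀ i j : ℤ, j ≠ 0 → ∀ φ : C.X i ⟶ C.X j,
        φ ≫ C.d j (j + 1) = 0 →
        ∃ ψ : C.X i ⟶ C.X (j - 1), ψ ≫ C.d (j - 1) j = φ)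
    -- `Homgr_A(C, C^i)` has homology concentrated in degree 0
    (hHomTo : ∀ i j : ℤ, j ≠ 0 → ∀ φ : C.X (-j) ⟶ C.X i,
        C.d (-j - 1) (-j) ≫ φ = 0 →
        ∃ ψ : C.X (-j + 1) ⟶ C.X i, C.d (-j) (-j + 1) ≫ ψ = φ) :
    Nonempty (HomotopyEquiv C
      ((HomologicalComplex.single (ModuleCat A) (ComplexShape.up ℤ) 0).obj
        (C.homology 0))) := by
  classical
  obtain ⟨n, hn⟩ := hbdd
  have hHomTo' : ∀ i j : ℤ, j ≠ 0 → ∀ φ : C.X j ⟶ C.X i,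
      C.d (j - 1) j ≫ φ = 0 →
      ∃ ψ : C.X (j + 1) ⟶ C.X i, C.d j (j + 1) ≫ ψ = φ := by
    intro i j hj
    have h := hHomTo i (-j) (by omega)
    rw [neg_neg j] at h
    exact h
  obtain ⟨σ, hrel⟩ := Okuyama9.total C n hn hHomFrom hHomTo'
  -- basic relations at degrees 1 and -1 (index arithmetic is definitional)
  have hrel1 : 𝟙 (C.X 1) = σ 1 0 ≫ C.d 0 1 + C.d 1 2 ≫ σ 2 1 := hrel 1 one_ne_zero
  have hrelm1 : 𝟙 (C.X (-1)) = σ (-1) (-2) ≫ C.d (-2) (-1) + C.d (-1) 0 ≫ σ 0 (-1) :=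
    hrel (-1) (by omega)
  set r : C.X 0 ⟶ C.X 0 :=
    𝟙 (C.X 0) - σ 0 (-1) ≫ C.d (-1) 0 - C.d 0 1 ≫ σ 1 0 with hrdef
  have hσ10d : σ 1 0 ≫ C.d 0 1 = 𝟙 (C.X 1) - C.d 1 2 ≫ σ 2 1 := by rw [hrel1]; abel
  have hdσ0 : C.d (-1) 0 ≫ σ 0 (-1) = 𝟙 (C.X (-1)) - σ (-1) (-2) ≫ C.d (-2) (-1) := by
    rw [hrelm1]; abel
  have hrd : r ≫ C.d 0 1 = 0 := by
    rw [hrdef]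
    simp only [Preadditive.sub_comp, Category.id_comp, Category.assoc, hσ10d]
    simp [Preadditive.comp_sub]
  have hdr : C.d (-1) 0 ≫ r = 0 := by
    rw [hrdef]
    simp only [Preadditive.comp_sub, Category.comp_id]
    rw [← Category.assoc, hdσ0]
    simp [Preadditive.sub_comp]
  have hσ10d' : ∀ {Z : ModuleCat A} (x : C.X 1 ⟶ Z),
      σ 1 0 ≫ C.d 0 1 ≫ x = x - C.d 1 2 ≫ σ 2 1 ≫ x := by
    intro Z x
    rw [← Category.assoc, hσ10d, Preadditive.sub_comp, Category.id_comp, Category.assoc]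
  have hdσ0' : ∀ {Z : ModuleCat A} (x : C.X (-1) ⟶ Z),
      C.d (-1) 0 ≫ σ 0 (-1) ≫ x = x - σ (-1) (-2) ≫ C.d (-2) (-1) ≫ x := by
    intro Z x
    rw [← Category.assoc, hdσ0, Preadditive.sub_comp, Category.id_comp, Category.assoc]
  have hrelm2 : 𝟙 (C.X (-2)) = σ (-2) (-3) ≫ C.d (-3) (-2) + C.d (-2) (-1) ≫ σ (-1) (-2) :=
    hrel (-2) (by omega)
  have hdσm2 : C.d (-2) (-1) ≫ σ (-1) (-2)
      = 𝟙 (C.X (-2)) - σ (-2) (-3) ≫ C.d (-3) (-2) := by rw [hrelm2]; abel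
  have hdσm2' : ∀ {Z : ModuleCat A} (x : C.X (-2) ⟶ Z),
      C.d (-2) (-1) ≫ σ (-1) (-2) ≫ x = x - σ (-2) (-3) ≫ C.d (-3) (-2) ≫ x := by
    intro Z x
    rw [← Category.assoc, hdσm2, Preadditive.sub_comp, Category.id_comp, Category.assoc]
  have hrd' : ∀ {Z : ModuleCat A} (x : C.X 1 ⟶ Z), r ≫ C.d 0 1 ≫ x = 0 := by
    intro Z x; rw [← Category.assoc, hrd, zero_comp]
  have hdr' : ∀ {Z : ModuleCat A} (x : C.X 0 ⟶ Z), C.d (-1) 0 ≫ r ≫ x = 0 := by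
    intro Z x; rw [← Category.assoc, hdr, zero_comp]
  -- the maps to and from the single complex
  have hnext0 : (ComplexShape.up ℤ).next 0 = 1 := CochainComplex.next ℤ 0
  have hprev0 : (ComplexShape.up ℤ).prev 0 = -1 := CochainComplex.prev ℤ 0
  set f0 : C.X 0 ⟶ C.homology 0 :=
    C.liftCycles r 1 hnext0 hrd ≫ C.homologyπ 0 with hf0def
  have hbd : C.toCycles (-1) 0 ≫ (C.iCycles 0 ≫ r) = 0 := by
    rw [← Category.assoc, HomologicalComplex.toCycles_i, hdr]
  set g0 : C.homology 0 ⟶ C.X 0 :=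
    (C.homologyIsCokernel (-1) 0 hprev0).desc (CokernelCofork.ofπ (C.iCycles 0 ≫ r) hbd)
    with hg0def
  have hπg0 : C.homologyπ 0 ≫ g0 = C.iCycles 0 ≫ r :=
    Cofork.IsColimit.π_desc (C.homologyIsCokernel (-1) 0 hprev0)
  have keyd : C.d (-1) 0 ≫ C.liftCycles r 1 hnext0 hrd = 0 := by
    rw [← cancel_mono (C.iCycles 0)]
    simp [hdr]
  have keyd' : ∀ {Z : ModuleCat A} (x : C.cycles 0 ⟶ Z),
      C.d (-1) 0 ≫ C.liftCycles r 1 hnext0 hrd ≫ x = 0 := by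
    intro Z x; rw [← Category.assoc, keyd, zero_comp]
  have keyi : C.iCycles 0 ≫ C.liftCycles r 1 hnext0 hrd
      = 𝟙 (C.cycles 0) - (C.iCycles 0 ≫ σ 0 (-1)) ≫ C.toCycles (-1) 0 := by
    rw [← cancel_mono (C.iCycles 0)]
    simp [hrdef, Preadditive.sub_comp, Preadditive.comp_sub]
  have hir : C.iCycles 0 ≫ r = C.iCycles 0 - (C.iCycles 0 ≫ σ 0 (-1)) ≫ C.d (-1) 0 := by
    simp [hrdef, Preadditive.comp_sub]
  have hg0f0 : g0 ≫ f0 = 𝟙 (C.homology 0) := by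
    rw [← cancel_epi (C.homologyπ 0), Category.comp_id, ← Category.assoc, hπg0, hf0def,
      ← Category.assoc, hir]
    simp only [Preadditive.sub_comp, Category.assoc, keyd', comp_zero, sub_zero]
    rw [← Category.assoc, keyi]
    simp [Preadditive.sub_comp]
  have hf0g0 : f0 ≫ g0 = r ≫ r := by
    rw [hf0def, Category.assoc, hπg0, ← Category.assoc, HomologicalComplex.liftCycles_i]
  set f : C ⟶ (HomologicalComplex.single (ModuleCat A) (ComplexShape.up ℤ) 0).obj
      (C.homology 0) :=
    HomologicalComplex.mkHomToSingle f0 (fun i hi => by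
      obtain rfl : i = -1 := by
        have : i + 1 = 0 := hi
        omega
      rw [hf0def]
      exact keyd' _) with hfdef
  set g : (HomologicalComplex.single (ModuleCat A) (ComplexShape.up ℤ) 0).obj
      (C.homology 0) ⟶ C :=
    HomologicalComplex.mkHomFromSingle g0 (fun k hk => by
      obtain rfl : k = 1 := by
        have : (0 : ℤ) + 1 = k := hk
        omega
      rw [← cancel_epi (C.homologyπ 0), ← Category.assoc, hπg0, Category.assoc, hrd,
        comp_zero, comp_zero]) with hgdef
  have hgf : g ≫ f = 𝟙 _ := by
    apply HomologicalComplex.hom_ext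
    intro i
    by_cases h0 : i = 0
    · subst h0
      rw [HomologicalComplex.comp_f, HomologicalComplex.id_f, hfdef, hgdef,
        HomologicalComplex.mkHomFromSingle_f, HomologicalComplex.mkHomToSingle_f]
      rw [Category.assoc, ← Category.assoc g0 f0, hg0f0, Category.id_comp, Iso.hom_inv_id]
    · apply (HomologicalComplex.isZero_single_obj_X _ 0 _ i h0).eq_of_src
  -- the contracting homotopy
  set H : ∀ i j : ℤ, C.X i ⟶ C.X j := fun i j =>
    if hij : j + 1 = i then
      -(if h0 : i = 0 then
          eqToHom (congrArg C.X h0) ≫ (𝟙 (C.X 0) + r) ≫ σ 0 (-1) ≫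
            eqToHom (congrArg C.X (show (-1 : ℤ) = j by omega))
        else σ i j)
    else 0 with hHdef
  have Hdiag : ∀ i j : ℤ, j + 1 = i → i ≠ 0 → H i j = -σ i j := by
    intro i j hij h0
    simp only [hHdef, dif_pos hij, dif_neg h0]
  have H00 : H 0 (-1) = -((𝟙 (C.X 0) + r) ≫ σ 0 (-1)) := by
    simp only [hHdef, dif_pos (show (-1 : ℤ) + 1 = 0 by norm_num), dif_pos rfl]
    simp
  have hzero : ∀ i j : ℤ, ¬ (ComplexShape.up ℤ).Rel j i → H i j = 0 := by
    intro i j hij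
    simp only [hHdef]
    exact dif_neg hij
  have hcomm : ∀ i : ℤ, HomologicalComplex.Hom.f (f ≫ g) i = dNext i H + prevD i H + HomologicalComplex.Hom.f (𝟙 C) i := by
    intro i
    rw [dNext_eq H (show (ComplexShape.up ℤ).Rel i (i + 1) from rfl),
      prevD_eq H (show (ComplexShape.up ℤ).Rel (i - 1) i by show i - 1 + 1 = i; omega),
      HomologicalComplex.comp_f, HomologicalComplex.id_f]
    by_cases h0 : i = 0
    · subst h0
      show f.f 0 ≫ g.f 0 = C.d 0 1 ≫ H 1 0 + H 0 (-1) ≫ C.d (-1) 0 + 𝟙 (C.X 0)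
      rw [H00, Hdiag 1 0 rfl one_ne_zero]
      have hfg0 : f.f 0 ≫ g.f 0 = r ≫ r := by
        rw [hfdef, hgdef, HomologicalComplex.mkHomToSingle_f,
          HomologicalComplex.mkHomFromSingle_f]
        rw [Category.assoc, ← Category.assoc _ _ g0, Iso.inv_hom_id, Category.id_comp, hf0g0]
      rw [hfg0]
      simp only [hrdef, Preadditive.comp_add, Preadditive.add_comp, Preadditive.comp_sub,
        Preadditive.sub_comp, Preadditive.neg_comp, Preadditive.comp_neg, Category.assoc,
        Category.id_comp, Category.comp_id, HomologicalComplex.d_comp_d,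
        HomologicalComplex.d_comp_d_assoc, zero_comp, comp_zero, hσ10d, hσ10d', hdσ0, hdσ0']
      abel
    · have hfz : f.f i = 0 :=
        (HomologicalComplex.isZero_single_obj_X _ 0 _ i h0).eq_of_tgt _ _
      rw [hfz, zero_comp]
      by_cases h1 : i = -1
      · subst h1
        show (0 : C.X (-1) ⟶ C.X (-1)) = C.d (-1) 0 ≫ H 0 (-1) + H (-1) (-2) ≫ C.d (-2) (-1) + 𝟙 (C.X (-1))
        rw [H00, Hdiag (-1) (-2) (by norm_num) (by norm_num)]
        simp only [hrdef, Preadditive.comp_add, Preadditive.add_comp, Preadditive.comp_sub,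
          Preadditive.sub_comp, Preadditive.neg_comp, Preadditive.comp_neg, Category.assoc,
          Category.id_comp, Category.comp_id, HomologicalComplex.d_comp_d,
          HomologicalComplex.d_comp_d_assoc, zero_comp, comp_zero, hσ10d, hσ10d', hdσ0, hdσ0',
          hdσm2, hdσm2']
        abel
      · rw [Hdiag (i + 1) i rfl (by omega), Hdiag i (i - 1) (by omega) h0]
        have hR := hrel i h0
        rw [Preadditive.comp_neg, Preadditive.neg_comp, hR]
        abel
  exact ⟨⟨f, g, ⟨H, hzero, hcomm⟩, Homotopy.ofEq hgf⟩⟩
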